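/- arXiv:1008.0928 — 4 statements merged into one kernel-verified Lean document; each statement's English description precedes it below -/
import Mathlib

section
/- Let μ ∈ ℝ, t > 0 and define q(x,t) = (1/C(t)) ∫₀^∞ (exp(−x²/(2s))/√(2πs)) · (exp(−(s−μt)²/(2t))/√(2πt)) ds, where C(t) = ∫_{−μ√t}^∞ (e^{−y²/2}/√(2π)) dy. Then for every β ∈ ℝ, ∫_{−∞}^{+∞} e^{iβx} q(x,t) dx = (1/C(t)) ∫_{−μ√t}^∞ (1/√(2π)) exp( −(β²/2)(√t·w + μt) − w²/2 ) dw. -/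
open Real MeasureTheory Complex

lemma ofReal_integral' (f : ℝ → ℝ) (m : Measure ℝ) :
    ((∫ x, f x ∂m : ℝ) : ℂ) = ∫ x, ((f x : ℝ) : ℂ) ∂m :=
  (integral_ofReal (𝕜 := ℂ)).symm

/-- Fourier transform of the heat kernel. -/
lemma gauss_fourier (β : ℝ) {s : ℝ} (hs : 0 < s) :
    (∫ x : ℝ, Complex.exp (Complex.I * β * x) *
        ((Real.exp (-x ^ 2 / (2 * s)) / Real.sqrt (2 * π * s) : ℝ) : ℂ))
      = Complex.exp (-(β : ℂ) ^ 2 * s / 2) := by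
  have hs' : (s : ℂ) ≠ 0 := by exact_mod_cast hs.ne'
  have ha : (0 : ℝ) < ((2 * s)⁻¹ : ℝ) := by positivity
  have haC : (0 : ℝ) < (((2 * s : ℝ)⁻¹ : ℝ) : ℂ).re := by simpa using ha
  have hsq : (0 : ℝ) < Real.sqrt (2 * π * s) := Real.sqrt_pos.mpr (by positivity)
  have hsqC : ((Real.sqrt (2 * π * s) : ℝ) : ℂ) ≠ 0 := by exact_mod_cast hsq.ne'
  have key : ∀ x : ℝ,
      Complex.exp (Complex.I * β * x) *
        ((Real.exp (-x ^ 2 / (2 * s)) / Real.sqrt (2 * π * s) : ℝ) : ℂ)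
      = (Complex.exp (Complex.I * β * x) *
          Complex.exp (-(((2 * s : ℝ)⁻¹ : ℝ) : ℂ) * (x : ℂ) ^ 2)) /
            ((Real.sqrt (2 * π * s) : ℝ) : ℂ) := by
    intro x
    rw [Complex.ofReal_div, Complex.ofReal_exp, mul_div_assoc]
    congr 2
    push_cast
    rw [div_eq_mul_inv]
    ring
  simp_rw [key]
  rw [integral_div, fourierIntegral_gaussian haC (β : ℂ)]
  have h1 : ((π : ℂ) / (((2 * s : ℝ)⁻¹ : ℝ) : ℂ)) = ((2 * π * s : ℝ) : ℂ) := by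
    push_cast
    field_simp
  have h2 : ((2 * π * s : ℝ) : ℂ) ^ (1 / 2 : ℂ) = ((Real.sqrt (2 * π * s) : ℝ) : ℂ) := by
    rw [Real.sqrt_eq_rpow, Complex.ofReal_cpow (by positivity)]
    norm_num
  have h3 : -(β : ℂ) ^ 2 / (4 * (((2 * s : ℝ)⁻¹ : ℝ) : ℂ)) = -(β : ℂ) ^ 2 * s / 2 := by
    push_cast
    field_simp
    ring
  rw [h1, h2, h3, mul_div_cancel_left₀ _ hsqC]

/-- Change of variables `s = √t · w + μ t` on `(0, ∞)`. -/
lemma subst_Ioi {E : Type*} [NormedAddCommGroup E] [NormedSpace ℝ E]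
    (μ t : ℝ) (ht : 0 < t) (h : ℝ → E) :
    (∫ s in Set.Ioi (0 : ℝ), h s)
      = Real.sqrt t • ∫ w in Set.Ioi (-μ * Real.sqrt t), h (Real.sqrt t * w + μ * t) := by
  have hst : 0 < Real.sqrt t := Real.sqrt_pos.mpr ht
  have hmul : Real.sqrt t * Real.sqrt t = t := Real.mul_self_sqrt ht.le
  have step2 : (∫ u in Set.Ioi (-(μ * t)), h (u + μ * t)) = ∫ s in Set.Ioi (0 : ℝ), h s := by
    have := MeasurePreserving.setIntegral_preimage_emb
      (measurePreserving_add_right volume (μ * t))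
      (MeasurableEquiv.addRight (μ * t)).measurableEmbedding h (Set.Ioi 0)
    simpa [Set.preimage_add_const_Ioi, zero_sub] using this
  have step1 : (∫ w in Set.Ioi (-μ * Real.sqrt t), h (Real.sqrt t * w + μ * t))
      = (Real.sqrt t)⁻¹ • ∫ u in Set.Ioi (-(μ * t)), h (u + μ * t) := by
    have := integral_comp_mul_left_Ioi (fun u => h (u + μ * t)) (-μ * Real.sqrt t) hst
    rw [show Real.sqrt t * (-μ * Real.sqrt t) = -(μ * t) by
      linear_combination (-μ) * hmul] at this
    exact this
  rw [step1, ← step2, smul_smul, mul_inv_cancel₀ hst.ne', one_smul]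

lemma integrable_gv (μ t : ℝ) (ht : 0 < t) :
    Integrable (fun s : ℝ => Real.exp (-(s - μ * t) ^ 2 / (2 * t)) / Real.sqrt (2 * π * t)) := by
  have h1 : Integrable (fun s : ℝ => Real.exp (-(2 * t)⁻¹ * s ^ 2)) :=
    integrable_exp_neg_mul_sq (by positivity)
  have h2 := h1.comp_sub_right (μ * t)
  have h3 := h2.div_const (Real.sqrt (2 * π * t))
  refine h3.congr ?_
  filter_upwards with s
  congr 1
  rw [neg_div, div_eq_mul_inv, mul_comm]
  ring_nf

lemma integrable_F (μ t β : ℝ) (ht : 0 < t) :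
    Integrable (fun p : ℝ × ℝ =>
      Complex.exp (Complex.I * β * p.1) *
        ((Real.exp (-p.1 ^ 2 / (2 * p.2)) / Real.sqrt (2 * π * p.2) *
          (Real.exp (-(p.2 - μ * t) ^ 2 / (2 * t)) / Real.sqrt (2 * π * t)) : ℝ) : ℂ))
      (volume.prod (volume.restrict (Set.Ioi 0))) := by
  have hmeas : AEStronglyMeasurable (fun p : ℝ × ℝ =>
      Complex.exp (Complex.I * β * p.1) *
        ((Real.exp (-p.1 ^ 2 / (2 * p.2)) / Real.sqrt (2 * π * p.2) *
          (Real.exp (-(p.2 - μ * t) ^ 2 / (2 * t)) / Real.sqrt (2 * π * t)) : ℝ) : ℂ))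
      (volume.prod (volume.restrict (Set.Ioi 0))) := by
    apply Measurable.aestronglyMeasurable
    fun_prop
  rw [integrable_prod_iff' hmeas]
  constructor
  · filter_upwards [ae_restrict_mem measurableSet_Ioi] with s hs
    have hs : (0 : ℝ) < s := hs
    have hreal : Integrable (fun x : ℝ =>
        Real.exp (-x ^ 2 / (2 * s)) / Real.sqrt (2 * π * s) *
          (Real.exp (-(s - μ * t) ^ 2 / (2 * t)) / Real.sqrt (2 * π * t))) := by
      have h1 : Integrable (fun x : ℝ => Real.exp (-(2 * s)⁻¹ * x ^ 2)) :=
        integrable_exp_neg_mul_sq (by positivity)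
      refine (h1.mul_const ((Real.sqrt (2 * π * s))⁻¹ *
        (Real.exp (-(s - μ * t) ^ 2 / (2 * t)) / Real.sqrt (2 * π * t)))).congr ?_
      filter_upwards with x
      rw [neg_div, div_eq_mul_inv (-x^2), mul_comm (-x^2)]
      ring_nf
    refine (hreal.ofReal (𝕜 := ℂ)).bdd_mul (c := 1) ?_ ?_
    · exact (Complex.measurable_exp.comp (by fun_prop)).aestronglyMeasurable
    · refine Filter.Eventually.of_forall fun x => ?_
      simp [Complex.norm_exp]
  · have key : ∀ s ∈ Set.Ioi (0:ℝ), (∫ x : ℝ, ‖Complex.exp (Complex.I * β * x) *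
        ((Real.exp (-x ^ 2 / (2 * s)) / Real.sqrt (2 * π * s) *
          (Real.exp (-(s - μ * t) ^ 2 / (2 * t)) / Real.sqrt (2 * π * t)) : ℝ) : ℂ)‖)
        = Real.exp (-(s - μ * t) ^ 2 / (2 * t)) / Real.sqrt (2 * π * t) := by
      intro s hs
      have hs : (0 : ℝ) < s := hs
      have hsq : (0 : ℝ) < Real.sqrt (2 * π * s) := Real.sqrt_pos.mpr (by positivity)
      have heq : ∀ x : ℝ, ‖Complex.exp (Complex.I * β * x) *
          ((Real.exp (-x ^ 2 / (2 * s)) / Real.sqrt (2 * π * s) *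
            (Real.exp (-(s - μ * t) ^ 2 / (2 * t)) / Real.sqrt (2 * π * t)) : ℝ) : ℂ)‖
          = Real.exp (-(2 * s)⁻¹ * x ^ 2) * ((Real.sqrt (2 * π * s))⁻¹ *
            (Real.exp (-(s - μ * t) ^ 2 / (2 * t)) / Real.sqrt (2 * π * t))) := by
        intro x
        have h0 : ‖Complex.exp (Complex.I * β * x)‖ = 1 := by
          simp [Complex.norm_exp]
        have hnn : (0:ℝ) ≤ Real.exp (-x ^ 2 / (2 * s)) / Real.sqrt (2 * π * s) *
            (Real.exp (-(s - μ * t) ^ 2 / (2 * t)) / Real.sqrt (2 * π * t)) := by positivity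
        rw [norm_mul, h0, one_mul, Complex.norm_real, Real.norm_eq_abs,
          _root_.abs_of_nonneg hnn]
        rw [show -x ^ 2 / (2 * s) = -(2 * s)⁻¹ * x ^ 2 by rw [neg_div, div_eq_mul_inv]; ring]
        ring
      simp_rw [heq]
      rw [MeasureTheory.integral_mul_const, integral_gaussian]
      rw [show π / (2 * s)⁻¹ = 2 * π * s by field_simp]
      rw [← mul_assoc, mul_inv_cancel₀ hsq.ne', one_mul]
    refine ((integrable_gv μ t ht).restrict (s := Set.Ioi 0)).congr ?_
    filter_upwards [ae_restrict_mem measurableSet_Ioi] with s hs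
    exact (key s hs).symm

/-- Normalizing factor `C(t) = Pr{B₂^μ(t) > 0}`. -/
noncomputable def normFactor (μ t : ℝ) : ℝ :=
  ∫ y in Set.Ioi (-μ * Real.sqrt t), Real.exp (-y ^ 2 / 2) / Real.sqrt (2 * π)

/-- Density of `I^μ(t) = B₁(|B₂^μ(t)|)`, a Brownian motion composed with the absolute
value of an independent Brownian motion with drift `μ`. -/
noncomputable def iterBMTimeDriftDensity (μ : ℝ) (x t : ℝ) : ℝ :=
  (normFactor μ t)⁻¹ * ∫ s in Set.Ioi (0 : ℝ),
    (Real.exp (-x ^ 2 / (2 * s)) / Real.sqrt (2 * π * s)) *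
      (Real.exp (-(s - μ * t) ^ 2 / (2 * t)) / Real.sqrt (2 * π * t))

/-- The Fourier transform (in the space variable) of the density of `B₁(|B₂^μ(t)|)`. -/
theorem iterBMTimeDriftDensity_fourier (μ t : ℝ) (ht : 0 < t) :
    ∀ β : ℝ,
      (∫ x : ℝ, Complex.exp (Complex.I * β * x) * (iterBMTimeDriftDensity μ x t : ℂ))
        = ((normFactor μ t)⁻¹ : ℂ) *
            ∫ w in Set.Ioi (-μ * Real.sqrt t),
              ((Real.sqrt (2 * π))⁻¹ : ℂ) *
                Complex.exp (-((β : ℂ) ^ 2 / 2) * (Real.sqrt t * w + μ * t) - (w : ℂ) ^ 2 / 2) := by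
  intro β
  have hst : 0 < Real.sqrt t := Real.sqrt_pos.mpr ht
  simp only [iterBMTimeDriftDensity]
  -- pull out the normalizing constant
  rw [show (fun x : ℝ => Complex.exp (Complex.I * β * x) *
      (((normFactor μ t)⁻¹ * ∫ s in Set.Ioi (0 : ℝ),
        Real.exp (-x ^ 2 / (2 * s)) / Real.sqrt (2 * π * s) *
          (Real.exp (-(s - μ * t) ^ 2 / (2 * t)) / Real.sqrt (2 * π * t)) : ℝ) : ℂ))
    = fun x : ℝ => ((normFactor μ t)⁻¹ : ℂ) * (Complex.exp (Complex.I * β * x) *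
      ((∫ s in Set.Ioi (0 : ℝ),
        Real.exp (-x ^ 2 / (2 * s)) / Real.sqrt (2 * π * s) *
          (Real.exp (-(s - μ * t) ^ 2 / (2 * t)) / Real.sqrt (2 * π * t)) : ℝ) : ℂ))
    from funext fun x => by push_cast; ring]
  rw [MeasureTheory.integral_const_mul]
  congr 1
  -- move everything inside a double integral
  have e1 : ∀ x : ℝ, Complex.exp (Complex.I * β * x) *
      ((∫ s in Set.Ioi (0 : ℝ),
        Real.exp (-x ^ 2 / (2 * s)) / Real.sqrt (2 * π * s) *
          (Real.exp (-(s - μ * t) ^ 2 / (2 * t)) / Real.sqrt (2 * π * t)) : ℝ) : ℂ)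
      = ∫ s in Set.Ioi (0 : ℝ), Complex.exp (Complex.I * β * x) *
          ((Real.exp (-x ^ 2 / (2 * s)) / Real.sqrt (2 * π * s) *
            (Real.exp (-(s - μ * t) ^ 2 / (2 * t)) / Real.sqrt (2 * π * t)) : ℝ) : ℂ) := by
    intro x
    rw [ofReal_integral', ← MeasureTheory.integral_const_mul]
  simp_rw [e1]
  rw [MeasureTheory.integral_integral_swap (integrable_F μ t β ht)]
  -- compute the inner Fourier integral
  have e2 : Set.EqOn (fun s : ℝ => ∫ x : ℝ, Complex.exp (Complex.I * β * x) *
      ((Real.exp (-x ^ 2 / (2 * s)) / Real.sqrt (2 * π * s) *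
        (Real.exp (-(s - μ * t) ^ 2 / (2 * t)) / Real.sqrt (2 * π * t)) : ℝ) : ℂ))
      (fun s : ℝ => Complex.exp (-(β : ℂ) ^ 2 * s / 2) *
        ((Real.exp (-(s - μ * t) ^ 2 / (2 * t)) / Real.sqrt (2 * π * t) : ℝ) : ℂ))
      (Set.Ioi 0) := by
    intro s hs
    have hs : (0 : ℝ) < s := hs
    have : ∀ x : ℝ, Complex.exp (Complex.I * β * x) *
        ((Real.exp (-x ^ 2 / (2 * s)) / Real.sqrt (2 * π * s) *
          (Real.exp (-(s - μ * t) ^ 2 / (2 * t)) / Real.sqrt (2 * π * t)) : ℝ) : ℂ)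
        = (Complex.exp (Complex.I * β * x) *
            ((Real.exp (-x ^ 2 / (2 * s)) / Real.sqrt (2 * π * s) : ℝ) : ℂ)) *
          ((Real.exp (-(s - μ * t) ^ 2 / (2 * t)) / Real.sqrt (2 * π * t) : ℝ) : ℂ) := by
      intro x; push_cast; ring
    simp only [this]
    rw [MeasureTheory.integral_mul_const, gauss_fourier β hs]
  rw [setIntegral_congr_fun measurableSet_Ioi e2]
  -- change of variables s = √t w + μ t
  rw [subst_Ioi μ t ht, ← integral_smul]
  refine setIntegral_congr_fun measurableSet_Ioi fun w _ => ?_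
  have hsqt : ((Real.sqrt t : ℝ) : ℂ) ≠ 0 := by exact_mod_cast hst.ne'
  have hsq2π : ((Real.sqrt (2 * π) : ℝ) : ℂ) ≠ 0 := by
    exact_mod_cast (Real.sqrt_pos.mpr (by positivity)).ne'
  rw [show Real.sqrt t * w + μ * t - μ * t = Real.sqrt t * w by ring]
  rw [show -(Real.sqrt t * w) ^ 2 / (2 * t) = -w ^ 2 / 2 by
    rw [mul_pow, Real.sq_sqrt ht.le]; field_simp]
  rw [show (2 : ℝ) * π * t = (2 * π) * t by ring, Real.sqrt_mul (by positivity) t]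
  rw [Complex.real_smul]
  push_cast
  have habs : ∀ (a b S T : ℂ), T ≠ 0 → S ≠ 0 →
      T * (a * (b / (S * T))) = S⁻¹ * (a * b) := fun a b S T hT hS => by
    field_simp
  rw [habs _ _ _ _ hsqt hsq2π, ← Complex.exp_add]
  congr 2
  ring
end

section
/- Let H ∈ (0,1) and x > 0. Then ∫₀^∞ s^{−2} · exp(−x²/(2 s^{2H})) / √(2π s^{2H}) ds = 2^{1/(2H) − 1} · Γ(1/(2H) + 1/2) / ( x^{1/H + 1} · H · √π ). -/
open Real MeasureTheory

/-- The key integral identity in the derivation of the governing equation for the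
density of a fractional Brownian motion at a Cauchy time:
`∫₀^∞ s⁻² e^{−x²/(2 s^{2H})} / √(2π s^{2H}) ds
  = 2^{1/(2H) − 1} Γ(1/(2H) + 1/2) / (x^{1/H + 1} H √π)`. -/
theorem integral_fbm_cauchy_key (H x : ℝ) (hH : H ∈ Set.Ioo (0 : ℝ) 1) (hx : 0 < x) :
    (∫ s in Set.Ioi (0 : ℝ),
        (s ^ 2)⁻¹ * (Real.exp (-x ^ 2 / (2 * s ^ (2 * H))) / Real.sqrt (2 * π * s ^ (2 * H))))
      = (2 : ℝ) ^ (1 / (2 * H) - 1) * Real.Gamma (1 / (2 * H) + 1 / 2)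
          / (x ^ (1 / H + 1) * H * Real.sqrt π) := by
  obtain ⟨hH0, hH1⟩ := hH
  set c : ℝ := x ^ 2 / 2 with hc
  have hcpos : 0 < c := by positivity
  set f : ℝ → ℝ := fun u => (Real.sqrt (2 * π))⁻¹ * (u ^ H * Real.exp (-c * u ^ (2 * H))) with hf
  have step1 : (∫ s in Set.Ioi (0 : ℝ),
        (s ^ 2)⁻¹ * (Real.exp (-x ^ 2 / (2 * s ^ (2 * H))) / Real.sqrt (2 * π * s ^ (2 * H))))
      = ∫ s in Set.Ioi (0 : ℝ), (|(-1 : ℝ)| * s ^ ((-1 : ℝ) - 1)) • f (s ^ (-1 : ℝ)) := by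
    refine setIntegral_congr_fun measurableSet_Ioi (fun s hs => ?_)
    have hs : (0 : ℝ) < s := hs
    have h1 : Real.sqrt (2 * π * s ^ (2 * H)) = Real.sqrt (2 * π) * s ^ H := by
      rw [Real.sqrt_mul (by positivity), show (2 : ℝ) * H = H * 2 by ring, Real.rpow_mul hs.le,
        show (2:ℝ) = ((2:ℕ):ℝ) by norm_num, Real.rpow_natCast, Real.sqrt_sq (by positivity)]
    have h2 : (s ^ (-1 : ℝ)) ^ (2 * H) = (s ^ (2 * H))⁻¹ := by
      rw [← Real.rpow_mul hs.le, neg_one_mul, Real.rpow_neg hs.le]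
    have hs2 : s ^ ((-1:ℝ) - 1) = (s ^ 2)⁻¹ := by
      rw [show (-1:ℝ) - 1 = -(2:ℕ) by norm_num, Real.rpow_neg hs.le, Real.rpow_natCast]
    rw [hf]
    simp only [smul_eq_mul, abs_neg, abs_one, one_mul, hs2, h1, h2, hc]
    rw [Real.rpow_neg hs.le, Real.rpow_one]
    rw [show -x^2 / (2 * s ^ (2*H)) = -(x^2/2) * (s ^ (2*H))⁻¹ by field_simp]
    rw [Real.inv_rpow hs.le]
    field_simp
  rw [step1, integral_comp_rpow_Ioi f (by norm_num : (-1 : ℝ) ≠ 0), hf]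
  rw [integral_const_mul, integral_rpow_mul_exp_neg_mul_rpow (by positivity) (by linarith) hcpos]
  have hG : (H + 1) / (2 * H) = 1 / (2 * H) + 1 / 2 := by field_simp; ring
  rw [hG]
  have hcval : c ^ (-(H + 1) / (2 * H)) = (x ^ (1 / H + 1))⁻¹ * 2 ^ (1 / (2 * H) + 1 / 2) := by
    rw [hc, Real.div_rpow (by positivity) (by norm_num), div_eq_mul_inv,
      ← Real.rpow_neg (by norm_num : (0:ℝ) ≤ 2),
      ← Real.rpow_natCast x 2, ← Real.rpow_mul hx.le]
    congr 1
    · rw [show ((2:ℕ):ℝ) * (-(H + 1) / (2 * H)) = -(1/H + 1) by field_simp; ring,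
        Real.rpow_neg hx.le]
    · congr 1
      field_simp
      ring
  rw [hcval]
  have hsq : Real.sqrt (2 * π) = 2 ^ ((1:ℝ)/2) * Real.sqrt π := by
    rw [Real.sqrt_mul (by norm_num), Real.sqrt_eq_rpow]
  have h2 : (2:ℝ) ^ (1 / (2 * H) + 1 / 2) = 2 ^ (1 / (2 * H) - 1) * (2 ^ ((1:ℝ)/2) * 2) := by
    rw [show 1/(2*H)+1/2 = (1/(2*H)-1) + (1/2 + 1) by ring, Real.rpow_add two_pos,
      Real.rpow_add two_pos, Real.rpow_one]
  rw [hsq, h2]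
  have hxp : (0:ℝ) < x ^ (1/H + 1) := Real.rpow_pos_of_pos hx _
  have hpp : (0:ℝ) < Real.sqrt π := Real.sqrt_pos.mpr pi_pos
  have h2p : (0:ℝ) < (2:ℝ) ^ ((1:ℝ)/2) := by positivity
  field_simp
end

section
/- Let n ≥ 1 and define, for t > 0, p_n(0,t) = 2^n ∫₀^∞ ⋯ ∫₀^∞ (1/√(2π w₁)) · (exp(−w₁²/(2w₂))/√(2π w₂)) ⋯ (exp(−w_{n−1}²/(2w_n))/√(2π w_n)) · (exp(−w_n²/(2t))/√(2π t)) dw₁ ⋯ dw_n. Then p_n(0,t) = (2^{n − 1/2^{n+1}} / √π) · t^{−1/2^{n+1}} · Γ(−1/2) / Γ(−1/2^{n+1}). -/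
open Real MeasureTheory

/-- Density `p_n(x,t)` of the `n`-times iterated Brownian motion
`I_n(t) = B₁(|B₂(...|B_{n+1}(t)|...)|)`, defined through its nested-integral recursion:
`p_0` is the standard Gaussian density and
`p_{n+1}(x,t) = 2 ∫₀^∞ (e^{−x²/(2w)}/√(2πw)) p_n(w,t) dw`, so that
`p_n(x,t) = 2^n ∫₀^∞⋯∫₀^∞ (e^{−x²/(2w₁)}/√(2πw₁)) (e^{−w₁²/(2w₂)}/√(2πw₂)) ⋯
(e^{−w_n²/(2t)}/√(2πt)) dw₁⋯dw_n`. -/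
noncomputable def iterBMDensity : ℕ → ℝ → ℝ → ℝ
  | 0, x, t => Real.exp (-x ^ 2 / (2 * t)) / Real.sqrt (2 * π * t)
  | n + 1, x, t =>
      2 * ∫ w in Set.Ioi (0 : ℝ),
        (Real.exp (-x ^ 2 / (2 * w)) / Real.sqrt (2 * π * w)) * iterBMDensity n w t


open Set
open scoped ENNReal

noncomputable def K (x t : ℝ) : ℝ := Real.exp (-x ^ 2 / (2 * t)) / Real.sqrt (2 * π * t)

lemma K_nonneg (x t : ℝ) : 0 ≤ K x t := div_nonneg (Real.exp_pos _).le (Real.sqrt_nonneg _)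

lemma K_le (x t : ℝ) : K x t ≤ K 0 t := by
  unfold K
  rcases le_or_gt t 0 with ht | ht
  · rw [Real.sqrt_eq_zero'.mpr (by nlinarith [Real.pi_pos] : 2 * π * t ≤ 0)]
    simp
  · have hs : 0 < Real.sqrt (2 * π * t) := Real.sqrt_pos.mpr (by positivity)
    rw [div_le_div_iff_of_pos_right hs]
    apply Real.exp_le_exp.mpr
    rw [neg_div, neg_div, neg_le_neg_iff]
    have h0 : (0:ℝ) ^ 2 = 0 := by norm_num
    rw [h0, zero_div]
    positivity

lemma measurable_K : Measurable fun p : ℝ × ℝ => K p.1 p.2 := by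
  unfold K; fun_prop

noncomputable def Q : ℕ → ℝ → ℝ → ℝ≥0∞
  | 0, x, t => ENNReal.ofReal (K x t)
  | n + 1, x, t => 2 * ∫⁻ w in Set.Ioi (0 : ℝ), ENNReal.ofReal (K x w) * Q n w t

example (n : ℕ) (x t : ℝ) : Q (n+1) x t = 2 * ∫⁻ w in Set.Ioi (0 : ℝ), ENNReal.ofReal (K x w) * Q n w t := rfl

lemma Qmeas (n : ℕ) : Measurable fun p : ℝ × ℝ => Q n p.1 p.2 := by
  induction n with
  | zero => exact measurable_K.ennreal_ofReal
  | succ m ih =>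
      have h1 : Measurable fun q : (ℝ × ℝ) × ℝ =>
          ENNReal.ofReal (K q.1.1 q.2) * Q m q.2 q.1.2 := by
        refine Measurable.mul ?_ ?_
        · exact (measurable_K.comp (measurable_fst.fst.prodMk measurable_snd)).ennreal_ofReal
        · exact ih.comp (measurable_snd.prodMk measurable_fst.snd)
      exact measurable_const.mul h1.lintegral_prod_right'

lemma Qle (n : ℕ) (x t : ℝ) : Q n x t ≤ Q n 0 t := by
  cases n with
  | zero => exact ENNReal.ofReal_le_ofReal (K_le x t)
  | succ m =>
      refine mul_le_mul_right (lintegral_mono fun w => ?_) 2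
      exact mul_le_mul_left (ENNReal.ofReal_le_ofReal (K_le x w)) _

lemma Qswap (n : ℕ) (x t : ℝ) :
    Q (n + 1) x t = 2 * ∫⁻ w in Set.Ioi (0 : ℝ), Q n x w * ENNReal.ofReal (K w t) := by
  induction n generalizing x t with
  | zero => rfl
  | succ m ih =>
      have step1 : Q (m + 2) x t
          = 2 * ∫⁻ w in Set.Ioi (0 : ℝ), ENNReal.ofReal (K x w) * Q (m + 1) w t := rfl
      rw [step1]
      have step2 : ∀ w : ℝ, ENNReal.ofReal (K x w) * Q (m + 1) w t
          = 2 * ∫⁻ u in Set.Ioi (0 : ℝ),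
              ENNReal.ofReal (K x w) * (Q m w u * ENNReal.ofReal (K u t)) := by
        intro w
        rw [ih w t, lintegral_const_mul' _ _ ENNReal.ofReal_ne_top]
        ring
      simp only [step2]
      rw [lintegral_const_mul' 2 _ (by norm_num)]
      have swap : (∫⁻ w in Set.Ioi (0 : ℝ), ∫⁻ u in Set.Ioi (0 : ℝ),
              ENNReal.ofReal (K x w) * (Q m w u * ENNReal.ofReal (K u t)))
          = ∫⁻ u in Set.Ioi (0 : ℝ), ∫⁻ w in Set.Ioi (0 : ℝ),
              ENNReal.ofReal (K x w) * (Q m w u * ENNReal.ofReal (K u t)) := by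
        apply lintegral_lintegral_swap
        apply Measurable.aemeasurable
        refine Measurable.mul ?_ (Measurable.mul ?_ ?_)
        · exact (measurable_K.comp (measurable_const.prodMk measurable_fst)).ennreal_ofReal
        · exact (Qmeas m).comp (measurable_fst.prodMk measurable_snd)
        · exact (measurable_K.comp (measurable_snd.prodMk measurable_const)).ennreal_ofReal
      rw [swap]
      have inner : ∀ u : ℝ, (∫⁻ w in Set.Ioi (0 : ℝ),
              ENNReal.ofReal (K x w) * (Q m w u * ENNReal.ofReal (K u t)))
          = (∫⁻ w in Set.Ioi (0 : ℝ), ENNReal.ofReal (K x w) * Q m w u)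
              * ENNReal.ofReal (K u t) := by
        intro u
        rw [← lintegral_mul_const' _ _ ENNReal.ofReal_ne_top]
        congr 1; funext w; ring
      simp only [inner]
      have final : ∀ u : ℝ, Q (m + 1) x u
          = 2 * ∫⁻ w in Set.Ioi (0 : ℝ), ENNReal.ofReal (K x w) * Q m w u := fun u => rfl
      rw [show (2:ℝ≥0∞) * (2 * ∫⁻ u in Set.Ioi (0:ℝ),
          (∫⁻ w in Set.Ioi (0:ℝ), ENNReal.ofReal (K x w) * Q m w u) * ENNReal.ofReal (K u t))
        = 2 * ∫⁻ u in Set.Ioi (0:ℝ), (2 * ∫⁻ w in Set.Ioi (0:ℝ),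
            ENNReal.ofReal (K x w) * Q m w u) * ENNReal.ofReal (K u t) by
          simp only [mul_assoc]
          rw [lintegral_const_mul' 2 _ (by norm_num)]]
      simp only [← final]

noncomputable def A (n : ℕ) : ℝ := 1 / 2 ^ (n + 1)

noncomputable def C (n : ℕ) : ℝ :=
  2 ^ ((n : ℝ) - A n) / Real.sqrt π * (Real.Gamma (-(1 / 2)) / Real.Gamma (-(A n)))

lemma A_pos (n : ℕ) : 0 < A n := by unfold A; positivity

lemma A_le_half (n : ℕ) : A n ≤ 1 / 2 := by
  unfold A
  rw [div_le_div_iff₀ (by positivity) (by norm_num)]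
  have : (2:ℝ) ^ 1 ≤ 2 ^ (n + 1) := pow_le_pow_right₀ (by norm_num) (by omega)
  simpa using this

lemma A_succ (n : ℕ) : A n = 2 * A (n + 1) := by
  unfold A
  rw [pow_succ]
  field_simp
  ring

lemma Gamma_neg_of {s : ℝ} (h1 : -1 < s) (h2 : s < 0) : Real.Gamma s < 0 := by
  have hne : s ≠ 0 := h2.ne
  have hadd := Real.Gamma_add_one hne
  have hpos : 0 < Real.Gamma (s + 1) := Real.Gamma_pos_of_pos (by linarith)
  nlinarith

lemma GA_neg (n : ℕ) : Real.Gamma (-(A n)) < 0 :=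
  Gamma_neg_of (by have := A_le_half n; linarith) (by have := A_pos n; linarith)

lemma C_pos (n : ℕ) : 0 < C n := by
  have h1 : Real.Gamma (-(1/2)) < 0 := Gamma_neg_of (by norm_num) (by norm_num)
  have h2 := GA_neg n
  have hr : 0 < Real.Gamma (-(1/2)) / Real.Gamma (-(A n)) := div_pos_of_neg_of_neg h1 h2
  have : (0:ℝ) < 2 ^ ((n : ℝ) - A n) / Real.sqrt π := by positivity
  exact mul_pos this hr

lemma C_rec (n : ℕ) :
    C n * Real.Gamma (1 / 2 - A (n + 1)) * (2:ℝ) ^ (-(A (n + 1))) / Real.sqrt π = C (n + 1) := by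
  set b := A (n + 1) with hb
  have hb0 : 0 < b := A_pos (n + 1)
  have hb4 : b ≤ 1 / 2 := A_le_half (n + 1)
  have hGb : Real.Gamma (-b) < 0 := GA_neg (n + 1)
  have hG2b : Real.Gamma (-(A n)) < 0 := GA_neg n
  have hAn : A n = 2 * b := A_succ n
  -- duplication formula at s = -b
  have hdup : Real.Gamma (1 / 2 - b)
      = Real.Gamma (-(2 * b)) * 2 ^ (1 + 2 * b) * Real.sqrt π / Real.Gamma (-b) := by
    have hd := Real.Gamma_mul_Gamma_add_half (-b)
    rw [show (-b + 1 / 2) = 1 / 2 - b by ring, show (2 * -b) = -(2 * b) by ring,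
      show (1 - -(2 * b)) = 1 + 2 * b by ring] at hd
    rw [eq_div_iff hGb.ne]
    rw [mul_comm] at hd; exact hd
  have hsq : Real.sqrt π ≠ 0 := by positivity
  have hpow : ∀ y : ℝ, (2:ℝ) ^ y ≠ 0 := fun y => (Real.rpow_pos_of_pos two_pos y).ne'
  unfold C
  rw [← hb, hAn, hdup]
  push_cast
  rw [show (-(2 * b)) = -(2*b) by ring]
  have hcomb : (2:ℝ) ^ ((n:ℝ) - 2 * b) * 2 ^ (1 + 2 * b) * 2 ^ (-b) = 2 ^ ((n:ℝ) + 1 - b) := by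
    rw [← Real.rpow_add two_pos, ← Real.rpow_add two_pos]
    congr 1; ring
  have hG2b' : Real.Gamma (-(2 * b)) ≠ 0 := by rw [← hAn]; exact hG2b.ne
  field_simp
  linear_combination (Real.Gamma (-(1/2)) * (Real.Gamma (-b))⁻¹) * hcomb

lemma gauss_int {s t : ℝ} (hs : -1 < s) (ht : 0 < t) :
    ∫ w in Set.Ioi (0:ℝ), w ^ s * K w t
      = (2 * t) ^ ((s + 1) / 2) / (2 * Real.sqrt (2 * π * t)) * Real.Gamma ((s + 1) / 2) := by
  have h2t : (0:ℝ) < 2 * t := by linarith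
  have hb : (0:ℝ) < 1 / (2 * t) := by positivity
  rw [setIntegral_congr_fun (g := fun w =>
      (1 / Real.sqrt (2 * π * t)) * (w ^ s * Real.exp (-(1 / (2 * t)) * w ^ (2:ℝ))))
      measurableSet_Ioi ?eq]
  case eq =>
    intro w hw
    have hw0 : (0:ℝ) < w := hw
    simp only []
    unfold K
    rw [show w ^ (2:ℝ) = w ^ 2 by rw [show (2:ℝ) = ((2:ℕ):ℝ) by norm_num, Real.rpow_natCast],
      show -(1 / (2 * t)) * w ^ 2 = -w ^ 2 / (2 * t) by ring]
    ring
  rw [integral_const_mul, integral_rpow_mul_exp_neg_mul_rpow two_pos hs hb]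
  have hp : (1 / (2 * t)) ^ (-(s + 1) / 2) = (2 * t) ^ ((s + 1) / 2) := by
    rw [one_div, ← Real.rpow_neg_one (2 * t),
      ← Real.rpow_mul h2t.le]
    congr 1; ring
  rw [hp]
  ring

lemma pow_alg (b t : ℝ) (ht : 0 < t) :
    (2 * t) ^ ((1:ℝ)/2 - b) / Real.sqrt (2 * π * t)
      = 2 ^ (-b) * t ^ (-b) / Real.sqrt π := by
  have hpi := Real.pi_pos
  rw [Real.sqrt_eq_rpow, Real.sqrt_eq_rpow, Real.mul_rpow two_pos.le ht.le,
    Real.mul_rpow (by positivity : (0:ℝ) ≤ 2 * π) ht.le,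
    Real.mul_rpow two_pos.le hpi.le,
    Real.rpow_sub two_pos, Real.rpow_sub ht,
    Real.rpow_neg two_pos.le, Real.rpow_neg ht.le]
  have h1 : (2:ℝ) ^ ((1:ℝ)/2) ≠ 0 := (Real.rpow_pos_of_pos two_pos _).ne'
  have h2 : t ^ ((1:ℝ)/2) ≠ 0 := (Real.rpow_pos_of_pos ht _).ne'
  have h3 : π ^ ((1:ℝ)/2) ≠ 0 := (Real.rpow_pos_of_pos hpi _).ne'
  have h4 : (2:ℝ) ^ b ≠ 0 := (Real.rpow_pos_of_pos two_pos _).ne'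
  have h5 : t ^ b ≠ 0 := (Real.rpow_pos_of_pos ht _).ne'
  field_simp

lemma Q0 (n : ℕ) : ∀ t : ℝ, 0 < t → Q n 0 t = ENNReal.ofReal (C n * t ^ (-(A n))) := by
  induction n with
  | zero =>
      intro t ht
      show ENNReal.ofReal (K 0 t) = _
      congr 1
      have hK : K 0 t = 1 / Real.sqrt (2 * π * t) := by unfold K; norm_num
      have hA0 : A 0 = 1 / 2 := by unfold A; norm_num
      have hC0 : C 0 = 2 ^ (-(1/2) : ℝ) / Real.sqrt π := by
        unfold C
        rw [hA0, div_self (Gamma_neg_of (by norm_num) (by norm_num)).ne, mul_one]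
        norm_num
      have hpa := pow_alg (1/2) t ht
      rw [sub_self, Real.rpow_zero] at hpa
      rw [hK, hC0, hA0]
      rw [hpa]; ring
  | succ m ih =>
      intro t ht
      have hb : (0:ℝ) < 1 / (2 * t) := by positivity
      have hAm1 : -1 < -(A m) := by have h := A_le_half m; linarith
      rw [Qswap]
      have hcong : (∫⁻ w in Set.Ioi (0:ℝ), Q m 0 w * ENNReal.ofReal (K w t))
          = ∫⁻ w in Set.Ioi (0:ℝ), ENNReal.ofReal (C m * (w ^ (-(A m)) * K w t)) := by
        refine setLIntegral_congr_fun measurableSet_Ioi (fun w hw => ?_)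
        rw [ih w hw, ← ENNReal.ofReal_mul
          (mul_nonneg (C_pos m).le (Real.rpow_nonneg (le_of_lt hw) _)), mul_assoc]
      rw [hcong]
      -- integrability
      have hint0 : IntegrableOn
          (fun w : ℝ => w ^ (-(A m)) * Real.exp (-(1/(2*t)) * w ^ (2:ℝ))) (Set.Ioi 0) :=
        integrableOn_rpow_mul_exp_neg_mul_rpow hAm1 two_pos hb
      have hint1 : IntegrableOn (fun w : ℝ => w ^ (-(A m)) * K w t) (Set.Ioi 0) := by
        refine MeasureTheory.IntegrableOn.congr_fun
          (hint0.const_mul (1 / Real.sqrt (2 * π * t))) ?_ measurableSet_Ioi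
        intro w hw
        have hw0 : (0:ℝ) < w := hw
        simp only []
        unfold K
        rw [show w ^ (2:ℝ) = w ^ 2 by
            rw [show (2:ℝ) = ((2:ℕ):ℝ) by norm_num, Real.rpow_natCast],
          show -(1 / (2 * t)) * w ^ 2 = -w ^ 2 / (2 * t) by ring]
        ring
      have hInt : Integrable (fun w : ℝ => C m * (w ^ (-(A m)) * K w t))
          (volume.restrict (Set.Ioi 0)) := hint1.const_mul (C m)
      have hnn : 0 ≤ᵐ[volume.restrict (Set.Ioi (0:ℝ))]
          fun w : ℝ => C m * (w ^ (-(A m)) * K w t) := by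
        refine (ae_restrict_iff' measurableSet_Ioi).mpr (Filter.Eventually.of_forall fun w hw => ?_)
        exact mul_nonneg (C_pos m).le
          (mul_nonneg (Real.rpow_nonneg (le_of_lt hw) _) (K_nonneg _ _))
      rw [← MeasureTheory.ofReal_integral_eq_lintegral_ofReal hInt hnn]
      rw [MeasureTheory.integral_const_mul, gauss_int hAm1 ht]
      rw [show (2:ℝ≥0∞) = ENNReal.ofReal 2 by simp, ← ENNReal.ofReal_mul (by norm_num)]
      congr 1
      rw [show (-(A m) + 1) / 2 = (1:ℝ)/2 - A (m+1) by rw [A_succ m]; ring]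
      rw [← C_rec m]
      have hpa := pow_alg (A (m+1)) t ht
      linear_combination (C m * Real.Gamma ((1:ℝ)/2 - A (m+1))) * hpa

lemma link (n : ℕ) : ∀ x t : ℝ, 0 < t → iterBMDensity n x t = (Q n x t).toReal := by
  induction n with
  | zero =>
      intro x t ht
      exact (ENNReal.toReal_ofReal (K_nonneg x t)).symm
  | succ m ih =>
      intro x t ht
      have hfin : ∀ w : ℝ, ENNReal.ofReal (K x w) * Q m w t < ⊤ := by
        intro w
        refine ENNReal.mul_lt_top ENNReal.ofReal_lt_top ?_
        calc Q m w t ≤ Q m 0 t := Qle m w t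
          _ < ⊤ := by rw [Q0 m t ht]; exact ENNReal.ofReal_lt_top
      have hmeas : AEMeasurable (fun w : ℝ => ENNReal.ofReal (K x w) * Q m w t)
          (volume.restrict (Set.Ioi 0)) := by
        refine Measurable.aemeasurable (Measurable.mul ?_ ?_)
        · exact (measurable_K.comp (measurable_const.prodMk measurable_id)).ennreal_ofReal
        · exact (Qmeas m).comp (measurable_id.prodMk measurable_const)
      have h1 : iterBMDensity (m + 1) x t
          = 2 * ∫ w in Set.Ioi (0:ℝ), K x w * iterBMDensity m w t := rfl
      rw [h1]
      rw [setIntegral_congr_fun measurableSet_Ioi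
        (g := fun w => (ENNReal.ofReal (K x w) * Q m w t).toReal)
        (fun w hw => by
          simp only []
          rw [ih w t ht, ENNReal.toReal_mul, ENNReal.toReal_ofReal (K_nonneg x w)])]
      rw [integral_toReal hmeas (Filter.Eventually.of_forall hfin)]
      show _ = (2 * ∫⁻ w in Set.Ioi (0:ℝ), ENNReal.ofReal (K x w) * Q m w t).toReal
      rw [ENNReal.toReal_mul, ENNReal.toReal_ofNat]

/-- Value at `x = 0` of the density of the `n`-times iterated Brownian motion:
`p_n(0,t) = (2^{n − 1/2^{n+1}} / √π) t^{−1/2^{n+1}} Γ(−1/2) / Γ(−1/2^{n+1})`. -/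
theorem iterBMDensity_at_zero (n : ℕ) (hn : 1 ≤ n) :
    ∀ t : ℝ, 0 < t →
      iterBMDensity n 0 t
        = ((2 : ℝ) ^ ((n : ℝ) - 1 / 2 ^ (n + 1)) / Real.sqrt π) *
            t ^ (-(1 / (2 : ℝ) ^ (n + 1))) *
            (Real.Gamma (-(1 / 2)) / Real.Gamma (-(1 / (2 : ℝ) ^ (n + 1)))) := by
  intro t ht
  rw [link n 0 t ht, Q0 n t ht,
    ENNReal.toReal_ofReal (mul_nonneg (C_pos n).le (Real.rpow_nonneg ht.le _))]
  unfold C A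
  ring
end

section
/- For every s ∈ ℝ and t > 0, t / (π(t²+s²)) = ∫₀^∞ (exp(−s²/(2w))/√(2πw)) · (t·exp(−t²/(2w))/√(2πw³)) dw. -/
open Real MeasureTheory

/-- The subordinating relationship expressing the Cauchy density as a mixture of a
Gaussian density against the density of the Brownian first-passage time:
`t/(π(t²+s²)) = ∫₀^∞ (e^{−s²/(2w)}/√(2πw)) (t e^{−t²/(2w)}/√(2πw³)) dw`. -/
theorem cauchy_density_subordination (s t : ℝ) (ht : 0 < t) :
    t / (π * (t ^ 2 + s ^ 2))
      = ∫ w in Set.Ioi (0 : ℝ),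
          (Real.exp (-s ^ 2 / (2 * w)) / Real.sqrt (2 * π * w)) *
            (t * Real.exp (-t ^ 2 / (2 * w)) / Real.sqrt (2 * π * w ^ 3)) := by
  set a : ℝ := t ^ 2 + s ^ 2 with ha_def
  have ha : 0 < a := by positivity
  have hπ : 0 < π := Real.pi_pos
  -- rewrite the integrand
  have hcongr : ∫ w in Set.Ioi (0 : ℝ),
          (Real.exp (-s ^ 2 / (2 * w)) / Real.sqrt (2 * π * w)) *
            (t * Real.exp (-t ^ 2 / (2 * w)) / Real.sqrt (2 * π * w ^ 3))
      = ∫ w in Set.Ioi (0 : ℝ),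
          (|(-1 : ℝ)| * w ^ ((-1 : ℝ) - 1)) •
            ((t / (2 * π)) * Real.exp (-(a / 2) * (w ^ (-1 : ℝ)))) := by
    refine setIntegral_congr_fun measurableSet_Ioi (fun w hw => ?_)
    have hw0 : 0 < w := hw
    have hs1 : Real.sqrt (2 * π * w) * Real.sqrt (2 * π * w ^ 3) = 2 * π * w ^ 2 := by
      rw [← Real.sqrt_mul (by positivity)]
      have : 2 * π * w * (2 * π * w ^ 3) = (2 * π * w ^ 2) ^ 2 := by ring
      rw [this, Real.sqrt_sq (by positivity)]
    have hexp : Real.exp (-s ^ 2 / (2 * w)) * Real.exp (-t ^ 2 / (2 * w))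
        = Real.exp (-(a / 2) * (w ^ (-1 : ℝ))) := by
      rw [← Real.exp_add, Real.rpow_neg_one]
      congr 1
      field_simp
      ring
    have hrw : w ^ ((-1 : ℝ) - 1) = (w ^ 2)⁻¹ := by
      rw [show ((-1 : ℝ) - 1) = ((-2 : ℤ) : ℝ) by norm_num, Real.rpow_intCast]
      simp [zpow_neg]
    rw [smul_eq_mul, hrw]
    rw [div_mul_div_comm, hs1, ← mul_assoc, mul_comm (Real.exp (-s ^ 2 / (2 * w))) t,
      mul_assoc, hexp]
    field_simp
    ring
  rw [hcongr, MeasureTheory.integral_comp_rpow_Ioi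
      (fun y => (t / (2 * π)) * Real.exp (-(a / 2) * y)) (by norm_num : (-1 : ℝ) ≠ 0)]
  rw [MeasureTheory.integral_const_mul]
  have : (∫ y in Set.Ioi (0 : ℝ), Real.exp (-(a / 2) * y))
      = (a / 2)⁻¹ := by
    have := MeasureTheory.integral_comp_mul_left_Ioi (fun x => Real.exp (-x)) 0
      (show (0:ℝ) < a / 2 by positivity)
    simp only [mul_zero, smul_eq_mul] at this
    calc (∫ y in Set.Ioi (0 : ℝ), Real.exp (-(a / 2) * y))
        = ∫ y in Set.Ioi (0 : ℝ), (fun x => Real.exp (-x)) (a / 2 * y) := by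
          congr 1; ext y; rw [neg_mul]
      _ = (a / 2)⁻¹ * ∫ x in Set.Ioi (0:ℝ), Real.exp (-x) := this
      _ = (a / 2)⁻¹ := by rw [integral_exp_neg_Ioi_zero, mul_one]
  rw [this]
  field_simp
end
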